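/- Let 𝒩 = {n₁ < n₂ < ⋯} be the set of nonnegative integers expressible as a sum of two squares, and ε > 0. Then the set of indices k with n_{k+1} − n_k ≤ n_k^ε has density one in ℕ; equivalently, along a density-one subsequence of 𝒩 the gap to the next element of 𝒩 is O(n^ε). -/

import Mathlib

open Real Filter

/-- The set of nonnegative integers expressible as a sum of two squares. -/
def sumTwoSquares : Set ℕ := {n | ∃ a b : ℤ, (n : ℤ) = a ^ 2 + b ^ 2}

lemma divisors_eq_filter {M k : ℕ} (hk : k ∈ Finset.Ioc 0 M) :
    k.divisors = (Finset.Ioc 0 M).filter (· ∣ k) := by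
  simp only [Finset.mem_Ioc] at hk
  ext e
  simp only [Nat.mem_divisors, Finset.mem_filter, Finset.mem_Ioc]
  constructor
  · rintro ⟨he, -⟩
    exact ⟨⟨Nat.pos_of_dvd_of_pos he hk.1, (Nat.le_of_dvd hk.1 he).trans hk.2⟩, he⟩
  · rintro ⟨-, he⟩
    exact ⟨he, by omega⟩

lemma count_multiples_le (M e f : ℕ) (he : 0 < e) (hf : 0 < f) :
    (((Finset.Ioc 0 M).filter (fun k => e ∣ k ∧ f ∣ k)).card : ℝ)
      ≤ M * (Nat.gcd e f) / (e * f) := by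
  have h1 : (Finset.Ioc 0 M).filter (fun k => e ∣ k ∧ f ∣ k)
      = (Finset.Ioc 0 M).filter (fun k => Nat.lcm e f ∣ k) := by
    ext k; simp [Nat.lcm_dvd_iff]
  rw [h1, Nat.Ioc_filter_dvd_card_eq_div]
  have hL : 0 < Nat.lcm e f := Nat.pos_of_ne_zero (Nat.lcm_ne_zero he.ne' hf.ne')
  have h2 : ((M / Nat.lcm e f : ℕ) : ℝ) ≤ (M : ℝ) / (Nat.lcm e f : ℕ) := by
    rw [le_div_iff₀ (by exact_mod_cast hL)]
    exact_mod_cast Nat.div_mul_le_self M (Nat.lcm e f)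
  refine h2.trans ?_
  have key : (Nat.gcd e f : ℝ) * Nat.lcm e f = e * f := by
    exact_mod_cast congrArg (Nat.cast (R := ℝ)) (Nat.gcd_mul_lcm e f)
  have hg : (0:ℝ) < Nat.gcd e f := by exact_mod_cast Nat.gcd_pos_of_pos_left f he
  rw [div_le_div_iff₀ (by exact_mod_cast hL) (by positivity)]
  calc (M:ℝ) * (e*f) = M * Nat.gcd e f * Nat.lcm e f := by rw [mul_assoc, key]
    _ ≤ M * Nat.gcd e f * Nat.lcm e f := le_rfl

lemma sum_gcd_div_le (M : ℕ) :
    ∑ e ∈ Finset.Ioc 0 M, ∑ f ∈ Finset.Ioc 0 M, ((Nat.gcd e f : ℝ)) / (e * f)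
      ≤ (∑ g ∈ Finset.Ioc 0 M, (g:ℝ)⁻¹) ^ 3 := by
  classical
  set A := Finset.Ioc 0 M with hA
  set h : ℕ × ℕ × ℕ → ℝ := fun t => (t.1 : ℝ)⁻¹ * ((t.2.1 : ℝ)⁻¹ * (t.2.2 : ℝ)⁻¹) with hh
  set ψ : ℕ × ℕ → ℕ × ℕ × ℕ := fun p => (Nat.gcd p.1 p.2, p.1 / Nat.gcd p.1 p.2, p.2 / Nat.gcd p.1 p.2) with hψ
  have h3 : (∑ g ∈ A, (g:ℝ)⁻¹) ^ 3 = ∑ t ∈ A ×ˢ A ×ˢ A, h t := by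
    rw [Finset.sum_product]
    simp only [Finset.sum_product, hh]
    simp only [← Finset.mul_sum]
    rw [← Finset.sum_mul, ← Finset.sum_mul]
    ring
  rw [h3]
  have hrw : ∑ e ∈ A, ∑ f ∈ A, ((Nat.gcd e f : ℝ)) / (e * f)
      = ∑ p ∈ A ×ˢ A, ((Nat.gcd p.1 p.2 : ℝ)) / (p.1 * p.2) := by
    rw [Finset.sum_product]
  rw [hrw]
  have hmaps : ∀ p ∈ A ×ˢ A, ψ p ∈ A ×ˢ A ×ˢ A := by
    rintro ⟨e, f⟩ hp
    simp only [hA, hψ, Finset.mem_product, Finset.mem_Ioc] at hp ⊢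
    have hg : 0 < Nat.gcd e f := Nat.gcd_pos_of_pos_left f hp.1.1
    exact ⟨⟨hg, le_trans (Nat.le_of_dvd hp.1.1 (Nat.gcd_dvd_left e f)) hp.1.2⟩,
      ⟨Nat.div_pos (Nat.le_of_dvd hp.1.1 (Nat.gcd_dvd_left e f)) hg,
        le_trans (Nat.div_le_self _ _) hp.1.2⟩,
      ⟨Nat.div_pos (Nat.le_of_dvd hp.2.1 (Nat.gcd_dvd_right e f)) hg,
        le_trans (Nat.div_le_self _ _) hp.2.2⟩⟩
  have hinj : Set.InjOn ψ (A ×ˢ A) := by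
    rintro ⟨e, f⟩ hp ⟨e', f'⟩ hp' heq
    simp only [hψ, Prod.mk.injEq] at heq
    obtain ⟨h1, h2, h3'⟩ := heq
    have he : e = Nat.gcd e f * (e / Nat.gcd e f) :=
      (Nat.mul_div_cancel' (Nat.gcd_dvd_left e f)).symm
    have hf : f = Nat.gcd e f * (f / Nat.gcd e f) :=
      (Nat.mul_div_cancel' (Nat.gcd_dvd_right e f)).symm
    have he' : e' = Nat.gcd e' f' * (e' / Nat.gcd e' f') :=
      (Nat.mul_div_cancel' (Nat.gcd_dvd_left e' f')).symm
    have hf' : f' = Nat.gcd e' f' * (f' / Nat.gcd e' f') :=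
      (Nat.mul_div_cancel' (Nat.gcd_dvd_right e' f')).symm
    have h4 : e = e' := by
      conv_lhs => rw [he, h2, h1]
      exact he'.symm
    have h5 : f = f' := by
      conv_lhs => rw [hf, h3', h1]
      exact hf'.symm
    simp [h4, h5]
  have hval : ∀ p ∈ A ×ˢ A, ((Nat.gcd p.1 p.2 : ℝ)) / (p.1 * p.2) = h (ψ p) := by
    rintro ⟨e, f⟩ hp
    simp only [hA, Finset.mem_product, Finset.mem_Ioc] at hp
    have hg : 0 < Nat.gcd e f := Nat.gcd_pos_of_pos_left f hp.1.1
    have he : (e:ℝ) = (Nat.gcd e f : ℝ) * ((e / Nat.gcd e f : ℕ) : ℝ) := by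
      exact_mod_cast congrArg (Nat.cast (R := ℝ)) (Nat.mul_div_cancel' (Nat.gcd_dvd_left e f)).symm
    have hf : (f:ℝ) = (Nat.gcd e f : ℝ) * ((f / Nat.gcd e f : ℕ) : ℝ) := by
      exact_mod_cast congrArg (Nat.cast (R := ℝ)) (Nat.mul_div_cancel' (Nat.gcd_dvd_right e f)).symm
    have h1 : (0:ℝ) < Nat.gcd e f := by exact_mod_cast hg
    have h2 : (0:ℝ) < ((e / Nat.gcd e f : ℕ) : ℝ) := by
      exact_mod_cast Nat.div_pos (Nat.le_of_dvd hp.1.1 (Nat.gcd_dvd_left e f)) hg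
    have h4 : (0:ℝ) < ((f / Nat.gcd e f : ℕ) : ℝ) := by
      exact_mod_cast Nat.div_pos (Nat.le_of_dvd hp.2.1 (Nat.gcd_dvd_right e f)) hg
    simp only [hψ, hh]
    rw [he, hf]
    field_simp
  calc ∑ p ∈ A ×ˢ A, ((Nat.gcd p.1 p.2 : ℝ)) / (p.1 * p.2)
      = ∑ p ∈ A ×ˢ A, h (ψ p) := Finset.sum_congr rfl hval
    _ = ∑ t ∈ (A ×ˢ A).image ψ, h t :=
        (Finset.sum_image (fun p hp q hq hpq => hinj (by simpa using hp) (by simpa using hq) hpq)).symm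
    _ ≤ ∑ t ∈ A ×ˢ A ×ˢ A, h t := by
        refine Finset.sum_le_sum_of_subset_of_nonneg ?_ (fun t _ _ => by positivity)
        intro t ht
        obtain ⟨p, hp, rfl⟩ := Finset.mem_image.mp ht
        exact hmaps p hp

lemma sum_dsq_le (M : ℕ) :
    ∑ k ∈ Finset.Ioc 0 M, ((k.divisors.card : ℝ)) ^ 2 ≤ M * (1 + Real.log M) ^ 3 := by
  classical
  set A := Finset.Ioc 0 M with hA
  have step1 : ∀ k ∈ A, ((k.divisors.card : ℝ)) ^ 2
      = ∑ e ∈ A, ∑ f ∈ A, (if e ∣ k ∧ f ∣ k then (1:ℝ) else 0) := by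
    intro k hk
    have h1 : (k.divisors.card : ℝ) = ∑ e ∈ A, (if e ∣ k then (1:ℝ) else 0) := by
      rw [divisors_eq_filter hk, Finset.sum_boole]
    rw [h1, pow_two, Finset.sum_mul]
    refine Finset.sum_congr rfl fun e _ => ?_
    rw [Finset.mul_sum]
    refine Finset.sum_congr rfl fun f _ => ?_
    by_cases h1 : e ∣ k <;> by_cases h2 : f ∣ k <;> simp [h1, h2]
  rw [Finset.sum_congr rfl step1]
  rw [Finset.sum_comm]
  have swap2 : ∀ e ∈ A, ∑ k ∈ A, ∑ f ∈ A, (if e ∣ k ∧ f ∣ k then (1:ℝ) else 0)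
      = ∑ f ∈ A, ∑ k ∈ A, (if e ∣ k ∧ f ∣ k then (1:ℝ) else 0) :=
    fun e _ => Finset.sum_comm
  rw [Finset.sum_congr rfl swap2]
  have step2 : ∀ e ∈ A, ∀ f ∈ A, ∑ k ∈ A, (if e ∣ k ∧ f ∣ k then (1:ℝ) else 0)
      ≤ M * (Nat.gcd e f) / (e * f) := by
    intro e he f hf
    rw [Finset.sum_boole]
    simp only [hA, Finset.mem_Ioc] at he hf
    exact count_multiples_le M e f he.1 hf.1
  calc ∑ e ∈ A, ∑ f ∈ A, ∑ k ∈ A, (if e ∣ k ∧ f ∣ k then (1:ℝ) else 0)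
      ≤ ∑ e ∈ A, ∑ f ∈ A, (M : ℝ) * (Nat.gcd e f) / (e * f) :=
        Finset.sum_le_sum fun e he => Finset.sum_le_sum fun f hf => step2 e he f hf
    _ = M * ∑ e ∈ A, ∑ f ∈ A, ((Nat.gcd e f : ℝ)) / (e * f) := by
        rw [Finset.mul_sum]
        refine Finset.sum_congr rfl fun e _ => ?_
        rw [Finset.mul_sum]
        exact Finset.sum_congr rfl fun f _ => by ring
    _ ≤ M * (∑ g ∈ A, (g:ℝ)⁻¹) ^ 3 := by
        have := sum_gcd_div_le M
        have hM : (0:ℝ) ≤ M := Nat.cast_nonneg M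
        exact mul_le_mul_of_nonneg_left this hM
    _ ≤ M * (1 + Real.log M) ^ 3 := by
        have hH : ∑ g ∈ A, (g:ℝ)⁻¹ = (harmonic M : ℝ) := by
          rw [harmonic_eq_sum_Icc]
          push_cast
          rw [hA, ← Finset.Icc_add_one_left_eq_Ioc, zero_add]
        have h1 : (harmonic M : ℝ) ≤ 1 + Real.log M := harmonic_le_one_add_log M
        have h0 : (0:ℝ) ≤ ∑ g ∈ A, (g:ℝ)⁻¹ :=
          Finset.sum_nonneg fun g _ => by positivity
        refine mul_le_mul_of_nonneg_left ?_ (Nat.cast_nonneg M)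
        rw [hH] at h0 ⊢
        exact pow_le_pow_left₀ h0 h1 3

lemma card_antidiag (k : ℕ) : (Nat.divisorsAntidiagonal k).card = k.divisors.card := by
  rw [← Nat.image_fst_divisorsAntidiagonal]
  refine (Finset.card_image_of_injOn ?_).symm
  rintro ⟨u, v⟩ hu ⟨u', v'⟩ hv h
  simp only [Finset.mem_coe, Nat.mem_divisorsAntidiagonal] at hu hv
  simp only at h
  subst h
  have hu0 : 0 < u := by
    rcases Nat.eq_zero_or_pos u with h | h
    · exfalso; apply hu.2; rw [← hu.1, h, zero_mul]
    · exact h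
  have : v = v' := Nat.eq_of_mul_eq_mul_left hu0 (hu.1.trans hv.1.symm)
  simp [this]

lemma cross_lt {a b c d : ℕ} (hlt : a < c) (heq : a^2 + b^2 = c^2 + d^2) : d < b := by
  have h1 : a^2 < c^2 := Nat.pow_lt_pow_left hlt (by norm_num)
  by_contra h
  push_neg at h
  have := Nat.pow_le_pow_left h 2
  omega

lemma energy_le (N : ℕ) :
    (((Finset.range (N+1) ×ˢ Finset.range (N+1)) ×ˢ
        (Finset.range (N+1) ×ˢ Finset.range (N+1))).filter
          (fun x : (ℕ × ℕ) × ℕ × ℕ => x.1.1^2 + x.1.2^2 = x.2.1^2 + x.2.2^2)).card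
      ≤ (N+1)^2 + 2 * ∑ k ∈ Finset.Ioc 0 (N^2), (k.divisors.card)^2 := by
  classical
  set P := Finset.range (N+1) ×ˢ Finset.range (N+1) with hP
  set E := (P ×ˢ P).filter
      (fun x : (ℕ × ℕ) × ℕ × ℕ => x.1.1^2 + x.1.2^2 = x.2.1^2 + x.2.2^2) with hE
  set S := Finset.sigma (Finset.Ioc 0 (N^2))
      (fun k => Nat.divisorsAntidiagonal k ×ˢ Nat.divisorsAntidiagonal k) with hS
  have hcardS : S.card = ∑ k ∈ Finset.Ioc 0 (N^2), (k.divisors.card)^2 := by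
    rw [hS, Finset.card_sigma]
    exact Finset.sum_congr rfl fun k _ => by rw [Finset.card_product, card_antidiag, sq]
  have hsub : E ⊆ (E.filter (fun x => x.1.1 = x.2.1) ∪ E.filter (fun x => x.1.1 < x.2.1))
      ∪ E.filter (fun x => x.2.1 < x.1.1) := by
    intro x hx
    rcases lt_trichotomy x.1.1 x.2.1 with h | h | h
    · exact Finset.mem_union_left _ (Finset.mem_union_right _ (Finset.mem_filter.mpr ⟨hx, h⟩))
    · exact Finset.mem_union_left _ (Finset.mem_union_left _ (Finset.mem_filter.mpr ⟨hx, h⟩))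
    · exact Finset.mem_union_right _ (Finset.mem_filter.mpr ⟨hx, h⟩)
  have h0 : (E.filter (fun x => x.1.1 = x.2.1)).card ≤ (N+1)^2 := by
    have hle : (E.filter (fun x => x.1.1 = x.2.1)).card ≤ P.card := by
      refine Finset.card_le_card_of_injOn (fun x => x.1) ?_ ?_
      · intro x hx
        simp only [hE, Finset.mem_coe, Finset.mem_filter] at hx
        exact (Finset.mem_product.mp hx.1.1).1
      · rintro x hx y hy h
        simp only [hE, Finset.coe_filter, Set.mem_setOf_eq, Finset.mem_filter,
          Finset.mem_product] at hx hy
        obtain ⟨⟨-, heq⟩, hac⟩ := hx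
        obtain ⟨⟨-, heq'⟩, hac'⟩ := hy
        have hx2 : x.1.2^2 = x.2.2^2 := by rw [hac] at heq; omega
        have hy2 : y.1.2^2 = y.2.2^2 := by rw [hac'] at heq'; omega
        have hx22 : x.1.2 = x.2.2 := Nat.pow_left_injective (by norm_num) hx2
        have hy22 : y.1.2 = y.2.2 := Nat.pow_left_injective (by norm_num) hy2
        have h2 : x.2 = y.2 := by
          have := congrArg Prod.fst h
          have := congrArg Prod.snd h
          ext
          · rw [← hac, ← hac']; exact congrArg Prod.fst h
          · rw [← hx22, ← hy22]; exact congrArg Prod.snd h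
        exact Prod.ext h h2
    calc _ ≤ P.card := hle
      _ = (N+1)^2 := by rw [hP, Finset.card_product, Finset.card_range, sq]
  -- the increasing part
  have h1 : (E.filter (fun x => x.1.1 < x.2.1)).card ≤ S.card := by
    refine Finset.card_le_card_of_injOn
      (fun x => ⟨x.2.1^2 - x.1.1^2, (x.2.1 - x.1.1, x.2.1 + x.1.1),
        (x.1.2 - x.2.2, x.1.2 + x.2.2)⟩) ?_ ?_
    · rintro ⟨⟨a, b⟩, c, d⟩ hx
      simp only [hE, hP, Finset.mem_coe, Finset.mem_filter, Finset.mem_product, Finset.mem_range] at hx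
      obtain ⟨⟨⟨⟨ha, hb⟩, hc, hd⟩, heq⟩, hlt⟩ := hx
      have hdb : d < b := cross_lt hlt heq
      have hk1 : 0 < c^2 - a^2 := by
        have : a^2 < c^2 := Nat.pow_lt_pow_left hlt (by norm_num)
        omega
      have hk2 : c^2 - a^2 ≤ N^2 := by
        have : c^2 ≤ N^2 := Nat.pow_le_pow_left (by omega) 2
        omega
      have hm1 : (c - a) * (c + a) = c^2 - a^2 := by
        rw [Nat.sq_sub_sq]; ring
      have hm2 : (b - d) * (b + d) = c^2 - a^2 := by
        have h' : (b - d) * (b + d) = b^2 - d^2 := by rw [Nat.sq_sub_sq]; ring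
        omega
      simp only [hS, Finset.mem_coe, Finset.mem_sigma, Finset.mem_Ioc, Finset.mem_product, Nat.mem_divisorsAntidiagonal]
      exact ⟨⟨hk1, hk2⟩, ⟨hm1, by omega⟩, ⟨hm2, by omega⟩⟩
    · rintro ⟨⟨a, b⟩, c, d⟩ hx ⟨⟨a', b'⟩, c', d'⟩ hy h
      simp only [hE, hP, Finset.coe_filter, Set.mem_setOf_eq, Finset.mem_filter,
        Finset.mem_product, Finset.mem_range] at hx hy
      obtain ⟨⟨-, heq⟩, hlt⟩ := hx
      obtain ⟨⟨-, heq'⟩, hlt'⟩ := hy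
      have hdb : d < b := cross_lt hlt heq
      have hdb' : d' < b' := cross_lt hlt' heq'
      simp only [Sigma.mk.inj_iff, Prod.mk.injEq, heq_eq_eq] at h
      obtain ⟨-, ⟨h3, h4⟩, h5, h6⟩ := h
      have : a = a' ∧ c = c' := by omega
      have : b = b' ∧ d = d' := by omega
      simp_all
  have h2 : (E.filter (fun x => x.2.1 < x.1.1)).card ≤ S.card := by
    refine Finset.card_le_card_of_injOn
      (fun x => ⟨x.1.1^2 - x.2.1^2, (x.1.1 - x.2.1, x.1.1 + x.2.1),
        (x.2.2 - x.1.2, x.2.2 + x.1.2)⟩) ?_ ?_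
    · rintro ⟨⟨a, b⟩, c, d⟩ hx
      simp only [hE, hP, Finset.mem_coe, Finset.mem_filter, Finset.mem_product, Finset.mem_range] at hx
      obtain ⟨⟨⟨⟨ha, hb⟩, hc, hd⟩, heq⟩, hlt⟩ := hx
      have hdb : b < d := cross_lt hlt heq.symm
      have hk1 : 0 < a^2 - c^2 := by
        have : c^2 < a^2 := Nat.pow_lt_pow_left hlt (by norm_num)
        omega
      have hk2 : a^2 - c^2 ≤ N^2 := by
        have : a^2 ≤ N^2 := Nat.pow_le_pow_left (by omega) 2
        omega
      have hm1 : (a - c) * (a + c) = a^2 - c^2 := by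
        rw [Nat.sq_sub_sq]; ring
      have hm2 : (d - b) * (d + b) = a^2 - c^2 := by
        have h' : (d - b) * (d + b) = d^2 - b^2 := by rw [Nat.sq_sub_sq]; ring
        omega
      simp only [hS, Finset.mem_coe, Finset.mem_sigma, Finset.mem_Ioc, Finset.mem_product, Nat.mem_divisorsAntidiagonal]
      exact ⟨⟨hk1, hk2⟩, ⟨hm1, by omega⟩, ⟨hm2, by omega⟩⟩
    · rintro ⟨⟨a, b⟩, c, d⟩ hx ⟨⟨a', b'⟩, c', d'⟩ hy h
      simp only [hE, hP, Finset.coe_filter, Set.mem_setOf_eq, Finset.mem_filter,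
        Finset.mem_product, Finset.mem_range] at hx hy
      obtain ⟨⟨-, heq⟩, hlt⟩ := hx
      obtain ⟨⟨-, heq'⟩, hlt'⟩ := hy
      have hdb : b < d := cross_lt hlt heq.symm
      have hdb' : b' < d' := cross_lt hlt' heq'.symm
      simp only [Sigma.mk.inj_iff, Prod.mk.injEq, heq_eq_eq] at h
      obtain ⟨-, ⟨h3, h4⟩, h5, h6⟩ := h
      have : a = a' ∧ c = c' := by omega
      have : b = b' ∧ d = d' := by omega
      simp_all
  calc E.card ≤ ((E.filter (fun x => x.1.1 = x.2.1) ∪ E.filter (fun x => x.1.1 < x.2.1))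
        ∪ E.filter (fun x => x.2.1 < x.1.1)).card := Finset.card_le_card hsub
    _ ≤ (E.filter (fun x => x.1.1 = x.2.1)).card + (E.filter (fun x => x.1.1 < x.2.1)).card
        + (E.filter (fun x => x.2.1 < x.1.1)).card :=
      le_trans (Finset.card_union_le _ _) (by
        have := Finset.card_union_le (E.filter (fun x => x.1.1 = x.2.1))
          (E.filter (fun x => x.1.1 < x.2.1))
        omega)
    _ ≤ (N+1)^2 + S.card + S.card := by
        have := h0; have := h1; have := h2; omega
    _ = (N+1)^2 + 2 * ∑ k ∈ Finset.Ioc 0 (N^2), (k.divisors.card)^2 := by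
        rw [hcardS]; ring

lemma cs_bound (N : ℕ) :
    (((N+1)^2 : ℝ))^2 ≤
      (((Finset.range (N+1) ×ˢ Finset.range (N+1)).image
          (fun p : ℕ × ℕ => p.1^2 + p.2^2)).card : ℝ) *
      (((((Finset.range (N+1) ×ˢ Finset.range (N+1)) ×ˢ
        (Finset.range (N+1) ×ˢ Finset.range (N+1))).filter
          (fun x : (ℕ × ℕ) × ℕ × ℕ => x.1.1^2 + x.1.2^2 = x.2.1^2 + x.2.2^2)).card : ℝ)) := by
  classical
  set P := Finset.range (N+1) ×ˢ Finset.range (N+1) with hP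
  set f : ℕ × ℕ → ℕ := fun p => p.1^2 + p.2^2 with hf
  set V := P.image f with hV
  set E := (P ×ˢ P).filter (fun x : (ℕ × ℕ) × ℕ × ℕ => f x.1 = f x.2) with hE
  have hPV : ∀ p ∈ P, f p ∈ V := fun p hp => Finset.mem_image_of_mem f hp
  have hcardP : P.card = ∑ n ∈ V, ((P.filter (fun p => f p = n)).card) :=
    Finset.card_eq_sum_card_fiberwise hPV
  have hcardE : E.card = ∑ n ∈ V, ((P.filter (fun p => f p = n)).card)^2 := by
    have hEV : ∀ x ∈ E, f x.1 ∈ V := by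
      intro x hx
      simp only [hE, Finset.mem_filter] at hx
      exact hPV x.1 (Finset.mem_product.mp hx.1).1
    rw [Finset.card_eq_sum_card_fiberwise hEV]
    refine Finset.sum_congr rfl fun n hn => ?_
    have hfe : E.filter (fun x => f x.1 = n)
        = (P.filter (fun p => f p = n)) ×ˢ (P.filter (fun p => f p = n)) := by
      ext ⟨p, q⟩
      simp only [hE, Finset.mem_filter, Finset.mem_product]
      constructor
      · rintro ⟨⟨⟨hp, hq⟩, heq⟩, hn'⟩
        exact ⟨⟨hp, hn'⟩, ⟨hq, heq ▸ hn'⟩⟩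
      · rintro ⟨⟨hp, hn'⟩, hq, hn''⟩
        exact ⟨⟨⟨hp, hq⟩, hn'.trans hn''.symm⟩, hn'⟩
    rw [hfe, Finset.card_product, sq]
  have hcast : ((N+1)^2 : ℝ) = (P.card : ℝ) := by
    rw [hP, Finset.card_product, Finset.card_range]
    push_cast
    ring
  rw [hcast]
  have h1 : (P.card : ℝ) = ∑ n ∈ V, ((P.filter (fun p => f p = n)).card : ℝ) := by
    rw [hcardP]; push_cast; ring
  have h2 : (E.card : ℝ) = ∑ n ∈ V, ((P.filter (fun p => f p = n)).card : ℝ)^2 := by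
    rw [hcardE]; push_cast; ring
  rw [h1, h2]
  exact sq_sum_le_card_mul_sum_sq

open Classical in
noncomputable def AX (X : ℕ) : Finset ℕ :=
  (Finset.range (X+1)).filter (fun n => n ∈ sumTwoSquares)

def goodP (ε : ℝ) (n : ℕ) : Prop :=
  ((sInf {m ∈ sumTwoSquares | n < m} : ℕ) : ℝ) - (n : ℝ) ≤ 1 * (n : ℝ) ^ ε

open Classical in
noncomputable def GX (ε : ℝ) (X : ℕ) : Finset ℕ :=
  (AX X).filter (fun n => goodP ε n)

open Classical in
noncomputable def BX (ε : ℝ) (X : ℕ) : Finset ℕ :=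
  (AX X).filter (fun n => ¬ goodP ε n)

lemma mem_AX {X n : ℕ} : n ∈ AX X ↔ n ∈ sumTwoSquares ∧ n ≤ X := by
  simp [AX, Nat.lt_succ_iff, and_comm]

lemma bad_card_le (ε : ℝ) (hε : 0 < ε) (X : ℕ) (hX : 1 ≤ X) :
    ((BX ε X).card : ℝ) ≤ Real.sqrt X + 2 + (X : ℝ) / (X : ℝ) ^ (ε/2) := by
  classical
  set Y : ℕ := Nat.sqrt X + 1 with hY
  set Treal : ℝ := (X : ℝ) ^ (ε/2) with hT
  have hX1 : (1:ℝ) ≤ (X:ℝ) := by exact_mod_cast hX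
  have hTreal1 : 1 ≤ Treal := Real.one_le_rpow hX1 (by positivity)
  have hTrealpos : 0 < Treal := lt_of_lt_of_le one_pos hTreal1
  set T' : ℕ := ⌈Treal⌉₊ with hT'
  have hT'pos : 0 < T' := by
    rw [hT']; exact Nat.ceil_pos.mpr hTrealpos
  -- key separation fact
  have hsep : ∀ n ∈ BX ε X, ∀ n' ∈ BX ε X, Y ≤ n → n < n' → n + T' ≤ n' := by
    intro n hn n' hn' hYn hlt
    simp only [BX, Finset.mem_filter, mem_AX] at hn hn'
    obtain ⟨⟨hnS, hnX⟩, hbad⟩ := hn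
    obtain ⟨⟨hn'S, _⟩, _⟩ := hn'
    -- sInf ≤ n'
    have hmem : n' ∈ {m ∈ sumTwoSquares | n < m} := ⟨hn'S, hlt⟩
    have hinf : sInf {m ∈ sumTwoSquares | n < m} ≤ n' := Nat.sInf_le hmem
    -- n^ε ≥ Treal
    have hsqrt : Real.sqrt X ≤ (n : ℝ) := by
      have h2 : (X : ℝ) ≤ (((Nat.sqrt X : ℕ) : ℝ) + 1)^2 := by
        have h := Nat.lt_succ_sqrt X
        have h' : (X:ℝ) < (((Nat.sqrt X : ℕ):ℝ) + 1) * (((Nat.sqrt X : ℕ):ℝ) + 1) := by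
          exact_mod_cast h
        nlinarith
      have h1 : Real.sqrt X ≤ (Y : ℝ) := by
        rw [hY]
        push_cast
        calc Real.sqrt X ≤ Real.sqrt ((((Nat.sqrt X : ℕ) : ℝ) + 1)^2) := Real.sqrt_le_sqrt h2
          _ = ((Nat.sqrt X : ℕ) : ℝ) + 1 := Real.sqrt_sq (by positivity)
      exact h1.trans (by exact_mod_cast hYn)
    have hnpow : Treal ≤ (n : ℝ) ^ ε := by
      have h1 : Treal = (Real.sqrt X) ^ ε := by
        rw [hT, Real.sqrt_eq_rpow, ← Real.rpow_mul (by positivity)]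
        ring_nf
      rw [h1]
      exact Real.rpow_le_rpow (Real.sqrt_nonneg _) hsqrt (le_of_lt hε)
    have hgap : Treal < (n' : ℝ) - (n : ℝ) := by
      have h2 : ((sInf {m ∈ sumTwoSquares | n < m} : ℕ) : ℝ) ≤ (n' : ℝ) := by
        exact_mod_cast hinf
      have h3 : 1 * (n:ℝ) ^ ε < ((sInf {m ∈ sumTwoSquares | n < m} : ℕ) : ℝ) - n := by
        exact lt_of_not_ge hbad
      rw [one_mul] at h3
      linarith
    have h4 : Treal < ((n' - n : ℕ) : ℝ) := by
      rw [Nat.cast_sub (le_of_lt hlt)]; exact hgap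
    have h5 : T' ≤ n' - n := Nat.ceil_le.mpr (le_of_lt h4)
    omega
  -- low part
  have hlow : ((BX ε X).filter (fun n => n < Y)).card ≤ Y := by
    calc ((BX ε X).filter (fun n => n < Y)).card ≤ (Finset.range Y).card := by
          apply Finset.card_le_card
          intro n hn
          simp only [Finset.mem_filter] at hn
          exact Finset.mem_range.mpr hn.2
      _ = Y := Finset.card_range Y
  -- high part
  have hhigh : ((BX ε X).filter (fun n => Y ≤ n)).card ≤ X / T' + 1 := by
    have hinj : Set.InjOn (fun n => n / T') ((BX ε X).filter (fun n => Y ≤ n)) := by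
      intro n hn n' hn' h
      simp only [Finset.coe_filter, Set.mem_setOf_eq] at hn hn'
      simp only at h
      by_contra hne
      rcases Nat.lt_or_ge n n' with hlt | hge
      · have hns := hsep n hn.1 n' hn'.1 hn.2 hlt
        have hq : n' / T' ≥ n / T' + 1 := by
          have hdm := Nat.div_mul_le_self n T'
          have h2 : (n / T' + 1) * T' ≤ n' := by
            calc (n / T' + 1) * T' = n / T' * T' + T' := by ring
              _ ≤ n + T' := by omega
              _ ≤ n' := hns
          exact (Nat.le_div_iff_mul_le hT'pos).mpr h2
        omega
      · have hlt' : n' < n := by omega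
        have hns := hsep n' hn'.1 n hn.1 hn'.2 hlt'
        have hq : n / T' ≥ n' / T' + 1 := by
          have hdm := Nat.div_mul_le_self n' T'
          have h2 : (n' / T' + 1) * T' ≤ n := by
            calc (n' / T' + 1) * T' = n' / T' * T' + T' := by ring
              _ ≤ n' + T' := by omega
              _ ≤ n := hns
          exact (Nat.le_div_iff_mul_le hT'pos).mpr h2
        omega
    have hmaps : ∀ n ∈ (BX ε X).filter (fun n => Y ≤ n), n / T' ∈ Finset.range (X / T' + 1) := by
      intro n hn
      rw [Finset.mem_filter] at hn
      have h1 : n ∈ AX X := (Finset.mem_filter.mp hn.1).1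
      have h2 : n ≤ X := (mem_AX.mp h1).2
      have h3 : n / T' ≤ X / T' := Nat.div_le_div_right h2
      exact Finset.mem_range.mpr (by omega)
    calc ((BX ε X).filter (fun n => Y ≤ n)).card ≤ (Finset.range (X / T' + 1)).card :=
          Finset.card_le_card_of_injOn _ hmaps hinj
      _ = X / T' + 1 := Finset.card_range _
  -- combine
  have hsplit : (BX ε X).card ≤ Y + (X / T' + 1) := by
    have : BX ε X ⊆ (BX ε X).filter (fun n => n < Y) ∪ (BX ε X).filter (fun n => Y ≤ n) := by
      intro n hn
      rcases Nat.lt_or_ge n Y with h | h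
      · exact Finset.mem_union_left _ (Finset.mem_filter.mpr ⟨hn, h⟩)
      · exact Finset.mem_union_right _ (Finset.mem_filter.mpr ⟨hn, h⟩)
    calc (BX ε X).card ≤ _ := Finset.card_le_card this
      _ ≤ _ := Finset.card_union_le _ _
      _ ≤ Y + (X / T' + 1) := by omega
  -- cast to ℝ
  have h6 : ((X / T' : ℕ) : ℝ) ≤ (X : ℝ) / Treal := by
    have h7 : ((X / T' : ℕ) : ℝ) ≤ (X : ℝ) / (T' : ℝ) := by
      rw [le_div_iff₀ (by exact_mod_cast hT'pos)]
      exact_mod_cast Nat.div_mul_le_self X T'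
    refine h7.trans ?_
    gcongr
    exact Nat.le_ceil Treal
  have h8 : ((Y : ℕ) : ℝ) ≤ Real.sqrt X + 1 := by
    rw [hY]
    push_cast
    have : ((Nat.sqrt X : ℕ) : ℝ) ≤ Real.sqrt X := by
      have hq : Nat.sqrt X ^ 2 ≤ X := Nat.sqrt_le' X
      calc ((Nat.sqrt X : ℕ) : ℝ) = Real.sqrt (((Nat.sqrt X : ℕ) : ℝ)^2) :=
            (Real.sqrt_sq (by positivity)).symm
        _ ≤ Real.sqrt X := Real.sqrt_le_sqrt (by exact_mod_cast hq)
    linarith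
  have := hsplit
  have hcast : ((BX ε X).card : ℝ) ≤ (Y : ℝ) + (((X / T' : ℕ) : ℝ) + 1) := by
    exact_mod_cast hsplit
  calc ((BX ε X).card : ℝ) ≤ (Y : ℝ) + (((X / T' : ℕ) : ℝ) + 1) := hcast
    _ ≤ (Real.sqrt X + 1) + ((X : ℝ) / Treal + 1) := by linarith
    _ = Real.sqrt X + 2 + (X : ℝ) / (X : ℝ) ^ (ε/2) := by rw [hT]; ring

lemma total_lower_raw (X : ℕ) (hX : 2 ≤ X) :
    (((Nat.sqrt (X/2) : ℕ) : ℝ) + 1)^4 /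
        ((((Nat.sqrt (X/2) : ℕ) : ℝ) + 1)^2
          + 2 * (((Nat.sqrt (X/2) : ℕ) : ℝ)^2 * (1 + Real.log (((Nat.sqrt (X/2) : ℕ) : ℝ)^2))^3))
      ≤ ((AX X).card : ℝ) := by
  classical
  set N := Nat.sqrt (X/2) with hN
  have hN1 : 1 ≤ N := by
    rw [hN]
    have : 1 ≤ X / 2 := by omega
    calc 1 = Nat.sqrt 1 := rfl
      _ ≤ Nat.sqrt (X/2) := Nat.sqrt_le_sqrt this
  set V := (Finset.range (N+1) ×ˢ Finset.range (N+1)).image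
      (fun p : ℕ × ℕ => p.1^2 + p.2^2) with hV
  set E := ((Finset.range (N+1) ×ˢ Finset.range (N+1)) ×ˢ
        (Finset.range (N+1) ×ˢ Finset.range (N+1))).filter
          (fun x : (ℕ × ℕ) × ℕ × ℕ => x.1.1^2 + x.1.2^2 = x.2.1^2 + x.2.2^2) with hE
  set D : ℝ := (((N : ℕ) : ℝ) + 1)^2
      + 2 * (((N : ℕ) : ℝ)^2 * (1 + Real.log (((N : ℕ) : ℝ)^2))^3) with hD
  have hlog0 : 0 ≤ Real.log (((N : ℕ) : ℝ)^2) := by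
    apply Real.log_nonneg
    have : (1:ℝ) ≤ ((N:ℕ):ℝ) := by exact_mod_cast hN1
    nlinarith
  have hDpos : 0 < D := by
    rw [hD]
    have h1 : (0:ℝ) < (((N : ℕ) : ℝ) + 1)^2 := by positivity
    have h2 : (0:ℝ) ≤ (1 + Real.log (((N : ℕ) : ℝ)^2))^3 := by positivity
    nlinarith [sq_nonneg ((N:ℕ):ℝ)]
  -- E card bound in ℝ
  have hEcard : ((E.card : ℕ) : ℝ) ≤ D := by
    have h1 : (E.card : ℕ) ≤ (N+1)^2 + 2 * ∑ k ∈ Finset.Ioc 0 (N^2), (k.divisors.card)^2 :=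
      energy_le N
    have h2 : ((E.card : ℕ) : ℝ)
        ≤ (((N:ℕ):ℝ)+1)^2 + 2 * ∑ k ∈ Finset.Ioc 0 (N^2), ((k.divisors.card : ℕ) : ℝ)^2 := by
      have := h1
      push_cast
      exact_mod_cast this
    refine h2.trans ?_
    rw [hD]
    have h3 : ∑ k ∈ Finset.Ioc 0 (N^2), ((k.divisors.card : ℕ) : ℝ)^2
        ≤ ((N^2 : ℕ) : ℝ) * (1 + Real.log ((N^2 : ℕ) : ℝ))^3 := sum_dsq_le (N^2)
    have h4 : ((N^2 : ℕ) : ℝ) = ((N:ℕ):ℝ)^2 := by push_cast; ring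
    rw [h4] at h3
    linarith
  -- V ⊆ AX X
  have hVA : V ⊆ AX X := by
    intro n hn
    rw [hV, Finset.mem_image] at hn
    obtain ⟨⟨a, b⟩, hab, rfl⟩ := hn
    simp only [Finset.mem_product, Finset.mem_range, Nat.lt_succ_iff] at hab
    rw [mem_AX]
    show a^2 + b^2 ∈ sumTwoSquares ∧ a^2 + b^2 ≤ X
    constructor
    · exact ⟨(a:ℤ), (b:ℤ), by push_cast; ring⟩
    · have hNsq : N^2 ≤ X/2 := Nat.sqrt_le' (X/2)
      have : a^2 + b^2 ≤ 2 * N^2 := by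
        have ha : a^2 ≤ N^2 := Nat.pow_le_pow_left hab.1 2
        have hb : b^2 ≤ N^2 := Nat.pow_le_pow_left hab.2 2
        omega
      omega
  have hVcard : ((V.card : ℕ) : ℝ) ≤ ((AX X).card : ℝ) := by
    exact_mod_cast Finset.card_le_card hVA
  -- combine
  have hcs : ((((N:ℕ):ℝ)+1)^2)^2 ≤ ((V.card : ℕ) : ℝ) * ((E.card : ℕ) : ℝ) := by
    have := cs_bound N
    have hcast : ((((N:ℕ):ℝ))+1)^2 = (((N+1)^2 : ℕ) : ℝ) := by push_cast; ring
    calc ((((N:ℕ):ℝ)+1)^2)^2 = ((((N+1)^2:ℕ):ℝ))^2 := by rw [hcast]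
      _ ≤ _ := by exact_mod_cast this
  have hchain : ((((N:ℕ):ℝ)+1)^2)^2 ≤ ((V.card : ℕ) : ℝ) * D := by
    refine hcs.trans ?_
    exact mul_le_mul_of_nonneg_left hEcard (Nat.cast_nonneg _)
  have : (((N:ℕ):ℝ)+1)^4 ≤ ((V.card : ℕ) : ℝ) * D := by
    calc (((N:ℕ):ℝ)+1)^4 = ((((N:ℕ):ℝ)+1)^2)^2 := by ring
      _ ≤ _ := hchain
  have hfinal : (((N:ℕ):ℝ)+1)^4 / D ≤ ((V.card : ℕ) : ℝ) := by
    rw [div_le_iff₀ hDpos]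
    exact this
  exact hfinal.trans hVcard

lemma total_lower_clean (η : ℝ) (hη : 0 < η) (hη2 : 3 * η ≤ 1) (X : ℕ) (hX : 2 ≤ X) :
    (X : ℝ) ^ (1 - 3*η) / (2 * (1 + 2 * (1 + 1/η)^3)) ≤ ((AX X).card : ℝ) := by
  set N := Nat.sqrt (X/2) with hN
  set m : ℝ := ((N : ℕ) : ℝ) + 1 with hm
  set C₂ : ℝ := 1 + 2 * (1 + 1/η)^3 with hC
  have hN1 : 1 ≤ N := by
    rw [hN]
    have h1 : 1 ≤ X / 2 := by omega
    calc 1 = Nat.sqrt 1 := rfl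
      _ ≤ Nat.sqrt (X/2) := Nat.sqrt_le_sqrt h1
  have hm1 : (1:ℝ) ≤ ((N:ℕ):ℝ) := by exact_mod_cast hN1
  have hm2 : (2:ℝ) ≤ m := by rw [hm]; linarith
  have hmpos : (0:ℝ) < m := by linarith
  have hCpos : (0:ℝ) < C₂ := by rw [hC]; positivity
  -- step 1: 1 + log(N^2) ≤ (1 + 1/η) * m ^ (2*η)   (rpow)
  have hlogbound : 1 + Real.log (((N:ℕ):ℝ)^2) ≤ (1 + 1/η) * m ^ (2*η) := by
    have h1 : Real.log (((N:ℕ):ℝ)^2) ≤ (((N:ℕ):ℝ)^2) ^ η / η :=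
      Real.log_le_rpow_div (by positivity) hη
    have h2 : (((N:ℕ):ℝ)^2) ^ η ≤ (m^2) ^ η := by
      apply Real.rpow_le_rpow (by positivity) ?_ (le_of_lt hη)
      nlinarith
    have h3 : (m^2 : ℝ) ^ η = m ^ (2*η) := by
      rw [← Real.rpow_natCast m 2, ← Real.rpow_mul (le_of_lt hmpos)]
      norm_num
    have h4 : (1:ℝ) ≤ m ^ (2*η) := Real.one_le_rpow (by linarith) (by positivity)
    rw [h3] at h2
    have h5 : Real.log (((N:ℕ):ℝ)^2) ≤ m ^ (2*η) / η := by
      refine h1.trans ?_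
      gcongr
    calc 1 + Real.log (((N:ℕ):ℝ)^2) ≤ m ^ (2*η) + m ^ (2*η) / η := by linarith
      _ = (1 + 1/η) * m ^ (2*η) := by field_simp
  -- step 2: D ≤ C₂ * m ^ (2 + 6*η)
  have hlog0 : 0 ≤ 1 + Real.log (((N:ℕ):ℝ)^2) := by
    have := Real.log_nonneg (by nlinarith : (1:ℝ) ≤ ((N:ℕ):ℝ)^2)
    linarith
  have hcube : (1 + Real.log (((N:ℕ):ℝ)^2))^3 ≤ (1 + 1/η)^3 * m ^ (6*η) := by
    calc (1 + Real.log (((N:ℕ):ℝ)^2))^3 ≤ ((1 + 1/η) * m ^ (2*η))^3 :=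
          pow_le_pow_left₀ hlog0 hlogbound 3
      _ = (1 + 1/η)^3 * (m ^ (2*η))^(3:ℕ) := by ring
      _ = (1 + 1/η)^3 * m ^ (6*η) := by
          have e1 : 2*η*((3:ℕ):ℝ) = 6*η := by push_cast; ring
          rw [← Real.rpow_natCast (m ^ (2*η)) 3, ← Real.rpow_mul (le_of_lt hmpos), e1]
  set D : ℝ := m^2 + 2 * (((N : ℕ) : ℝ)^2 * (1 + Real.log (((N : ℕ) : ℝ)^2))^3) with hD
  have hm2r : m^2 = m ^ (((2:ℕ)):ℝ) := (Real.rpow_natCast m 2).symm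
  have hmexp : (1:ℝ) ≤ m := by linarith
  have hDle : D ≤ C₂ * m ^ (2 + 6*η) := by
    have h1 : ((N:ℕ):ℝ)^2 ≤ m^2 := by nlinarith
    have h2 : ((N:ℕ):ℝ)^2 * (1 + Real.log (((N : ℕ) : ℝ)^2))^3
        ≤ m^2 * ((1 + 1/η)^3 * m ^ (6*η)) := by
      apply mul_le_mul h1 hcube (by positivity) (by positivity)
    have h3 : m^2 * ((1 + 1/η)^3 * m ^ (6*η)) = (1 + 1/η)^3 * m ^ (2 + 6*η) := by
      rw [hm2r, Real.rpow_add hmpos 2 (6*η)]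
      push_cast
      ring
    have h4 : m^2 ≤ m ^ (2 + 6*η) := by
      rw [hm2r]
      apply Real.rpow_le_rpow_of_exponent_le hmexp
      push_cast
      linarith
    rw [h3] at h2
    have h5 : 2 * (((N:ℕ):ℝ)^2 * (1 + Real.log (((N : ℕ) : ℝ)^2))^3)
        ≤ 2 * ((1 + 1/η)^3 * m ^ (2 + 6*η)) :=
      mul_le_mul_of_nonneg_left h2 (by norm_num)
    calc D = m^2 + 2 * (((N:ℕ):ℝ)^2 * (1 + Real.log (((N : ℕ) : ℝ)^2))^3) := hD
      _ ≤ m ^ (2+6*η) + 2 * ((1 + 1/η)^3 * m ^ (2 + 6*η)) := add_le_add h4 h5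
      _ = C₂ * m ^ (2 + 6*η) := by rw [hC]; ring
  -- step 3: lower bound via raw
  have hDpos : 0 < D := by
    rw [hD]
    have : (0:ℝ) ≤ ((N:ℕ):ℝ)^2 * (1 + Real.log (((N : ℕ) : ℝ)^2))^3 := by positivity
    nlinarith
  have hraw : m^4 / D ≤ ((AX X).card : ℝ) := by
    have := total_lower_raw X hX
    rw [← hN] at this
    exact this
  have hstep : m ^ (2 - 6*η) / C₂ ≤ m^4 / D := by
    have hub : 0 < C₂ * m ^ (2 + 6*η) := by positivity
    have h1 : m^4 / (C₂ * m ^ (2 + 6*η)) ≤ m^4 / D :=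
      div_le_div_of_nonneg_left (by positivity) hDpos hDle
    refine le_trans (le_of_eq ?_) h1
    have e2 : (((4:ℕ)):ℝ) - (2+6*η) = 2 - 6*η := by push_cast; ring
    calc m ^ (2-6*η) / C₂ = m ^ ((((4:ℕ)):ℝ) - (2+6*η)) / C₂ := by rw [e2]
      _ = (m ^ (((4:ℕ)):ℝ) / m ^ (2+6*η)) / C₂ := by rw [Real.rpow_sub hmpos]
      _ = m^4 / (C₂ * m ^ (2+6*η)) := by
          rw [Real.rpow_natCast m 4, div_div, mul_comm (m ^ (2+6*η)) C₂]
  -- step 4: m ^ (2-6η) ≥ (X/2)^(1-3η) ≥ X^(1-3η)/2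
  have hXhalf : (X:ℝ)/2 ≤ m^2 := by
    have h1 : X / 2 < (N+1)^2 := Nat.lt_succ_sqrt' (X/2)
    have h2 : X ≤ 2*(X/2) + 1 := by omega
    have h3 : (X:ℝ) ≤ 2*((X/2 : ℕ):ℝ) + 1 := by exact_mod_cast h2
    have h4 : ((X/2:ℕ):ℝ) + 1 ≤ ((N+1:ℕ):ℝ)^2 := by exact_mod_cast h1
    have h5 : m = ((N+1:ℕ):ℝ) := by rw [hm]; push_cast; ring
    rw [h5]
    nlinarith
  have hstep2 : ((X:ℝ)/2) ^ (1 - 3*η) ≤ m ^ (2 - 6*η) := by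
    have h1 : ((X:ℝ)/2) ^ (1-3*η) ≤ (m^2) ^ (1-3*η) :=
      Real.rpow_le_rpow (by positivity) hXhalf (by linarith)
    refine h1.trans (le_of_eq ?_)
    rw [hm2r, ← Real.rpow_mul (le_of_lt hmpos)]
    ring_nf
  have hstep3 : (X:ℝ) ^ (1-3*η) / 2 ≤ ((X:ℝ)/2) ^ (1-3*η) := by
    rw [Real.div_rpow (by positivity) (by norm_num)]
    have h2le : (2:ℝ) ^ (1-3*η) ≤ 2 := by
      calc (2:ℝ) ^ (1-3*η) ≤ (2:ℝ) ^ (1:ℝ) :=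
          Real.rpow_le_rpow_of_exponent_le (by norm_num) (by linarith)
        _ = 2 := Real.rpow_one 2
    exact div_le_div_of_nonneg_left (by positivity)
      (Real.rpow_pos_of_pos (by norm_num) _) h2le
  -- combine
  have hfin : (X:ℝ) ^ (1-3*η) / (2*C₂) ≤ m ^ (2-6*η) / C₂ := by
    have h6 : (X:ℝ)^(1-3*η)/2/C₂ ≤ m ^ (2-6*η)/C₂ := by
      gcongr
      exact hstep3.trans hstep2
    refine le_trans (le_of_eq ?_) h6
    rw [div_div]
  exact hfin.trans (hstep.trans hraw)

/-- Along a density one subsequence of the set 𝒩 of sums of two squares, the gap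
to the next element of 𝒩 is O(n^ε). -/
theorem gaps_sum_two_squares (ε : ℝ) (hε : 0 < ε) :
    ∃ Cg : ℝ, 0 < Cg ∧
      Tendsto (fun X : ℕ =>
        (({n ∈ sumTwoSquares | n ≤ X ∧
            ((sInf {m ∈ sumTwoSquares | n < m} : ℕ) : ℝ) - (n : ℝ) ≤ Cg * (n : ℝ) ^ ε}).ncard : ℝ) /
        (({n ∈ sumTwoSquares | n ≤ X}).ncard : ℝ)) atTop (nhds 1) := by
  classical
  refine ⟨1, one_pos, ?_⟩
  -- identify the sets with finsets
  have hAset : ∀ X : ℕ, {n ∈ sumTwoSquares | n ≤ X} = (↑(AX X) : Set ℕ) := by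
    intro X
    ext n
    simp only [Set.mem_setOf_eq, Finset.coe_filter, Finset.mem_coe, mem_AX]
  have hGset : ∀ X : ℕ, {n ∈ sumTwoSquares | n ≤ X ∧
      ((sInf {m ∈ sumTwoSquares | n < m} : ℕ) : ℝ) - (n : ℝ) ≤ 1 * (n : ℝ) ^ ε}
      = (↑(GX ε X) : Set ℕ) := by
    intro X
    ext n
    simp only [Set.mem_setOf_eq, Finset.mem_coe, GX, Finset.mem_filter, mem_AX, goodP]
    exact ⟨fun h => Finset.mem_filter.mpr ⟨mem_AX.mpr ⟨h.1, h.2.1⟩, h.2.2⟩,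
      fun h => ⟨(mem_AX.mp (Finset.mem_filter.mp h).1).1, (mem_AX.mp (Finset.mem_filter.mp h).1).2,
        (Finset.mem_filter.mp h).2⟩⟩
  -- the basic count identities
  have hApos : ∀ X : ℕ, 0 < ((AX X).card : ℝ) := by
    intro X
    have h0 : 0 ∈ AX X := mem_AX.mpr ⟨⟨0, 0, by norm_num⟩, Nat.zero_le X⟩
    have : 0 < (AX X).card := Finset.card_pos.mpr ⟨0, h0⟩
    exact_mod_cast this
  have hGB : ∀ X : ℕ, ((GX ε X).card : ℝ) = ((AX X).card : ℝ) - ((BX ε X).card : ℝ) := by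
    intro X
    have := Finset.card_filter_add_card_filter_not
      (s := AX X) (p := fun n => goodP ε n)
    have h2 : (GX ε X).card + (BX ε X).card = (AX X).card := this
    push_cast [← h2]
    ring
  -- choose parameters
  set η : ℝ := min ε 1 / 12 with hηdef
  have hη : 0 < η := by
    rw [hηdef]
    have : 0 < min ε 1 := lt_min hε one_pos
    linarith
  have hη2 : 3 * η ≤ 1 := by
    rw [hηdef]
    have : min ε 1 ≤ 1 := min_le_right _ _
    linarith
  set β : ℝ := max (1/2) (1 - ε/2) with hβdef
  have hβ1 : (1:ℝ)/2 ≤ β := le_max_left _ _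
  have hβlt : β < 1 - 3*η := by
    rcases le_or_gt ε 1 with h | h
    · have hmin : min ε 1 = ε := min_eq_left h
      rw [hβdef, hηdef, hmin]
      apply max_lt
      · linarith
      · linarith
    · have hmin : min ε 1 = 1 := min_eq_right (le_of_lt h)
      rw [hβdef, hηdef, hmin]
      apply max_lt
      · linarith
      · linarith
  set C₂ : ℝ := 1 + 2 * (1 + 1/η)^3 with hC
  have hCpos : (0:ℝ) < C₂ := by rw [hC]; positivity
  set δ : ℝ := (1 - 3*η) - β with hδdef
  have hδ : 0 < δ := by rw [hδdef]; linarith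
  -- bad over total bound
  have hratio : ∀ X : ℕ, 2 ≤ X →
      ((BX ε X).card : ℝ) / ((AX X).card : ℝ) ≤ 8 * C₂ * (X:ℝ) ^ (-δ) := by
    intro X hX
    have hX1R : (1:ℝ) ≤ (X:ℝ) := by exact_mod_cast (by omega : 1 ≤ X)
    have hXpos : (0:ℝ) < (X:ℝ) := by linarith
    -- numerator bound
    have hBnum : ((BX ε X).card : ℝ) ≤ 4 * (X:ℝ) ^ β := by
      have h1 := bad_card_le ε hε X (by omega)
      have hsqrt : Real.sqrt X ≤ (X:ℝ) ^ β := by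
        rw [Real.sqrt_eq_rpow]
        exact Real.rpow_le_rpow_of_exponent_le hX1R hβ1
      have hone : (1:ℝ) ≤ (X:ℝ) ^ β := Real.one_le_rpow hX1R (by linarith)
      have hdiv : (X:ℝ) / (X:ℝ) ^ (ε/2) ≤ (X:ℝ) ^ β := by
        have h2 : (X:ℝ) / (X:ℝ) ^ (ε/2) = (X:ℝ) ^ (1 - ε/2) := by
          rw [Real.rpow_sub hXpos, Real.rpow_one]
        rw [h2]
        exact Real.rpow_le_rpow_of_exponent_le hX1R (le_max_right _ _)
      linarith
    have hden := total_lower_clean η hη hη2 X hX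
    rw [← hC] at hden
    have hLpos : 0 < (X:ℝ) ^ (1 - 3*η) / (2 * C₂) := by positivity
    have h3 : ((BX ε X).card : ℝ) / ((AX X).card : ℝ)
        ≤ (4 * (X:ℝ) ^ β) / ((X:ℝ) ^ (1 - 3*η) / (2 * C₂)) := by
      apply div_le_div₀ (by positivity) hBnum hLpos hden
    refine h3.trans (le_of_eq ?_)
    have hexp : (X:ℝ)^(-δ) * (X:ℝ)^(1-3*η) = (X:ℝ)^β := by
      rw [← Real.rpow_add hXpos]
      congr 1
      rw [hδdef]
      ring
    rw [div_div_eq_mul_div,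
      div_eq_iff (ne_of_gt (Real.rpow_pos_of_pos hXpos (1-3*η))),
      show (8:ℝ) * C₂ * (X:ℝ)^(-δ) * (X:ℝ)^(1-3*η)
        = 8 * C₂ * ((X:ℝ)^(-δ) * (X:ℝ)^(1-3*η)) by ring, hexp]
    ring
  -- tendsto of bound
  have hbound0 : Tendsto (fun X : ℕ => 8 * C₂ * (X:ℝ) ^ (-δ)) atTop (nhds 0) := by
    have h1 : Tendsto (fun x : ℝ => x ^ (-δ)) atTop (nhds 0) := tendsto_rpow_neg_atTop hδ
    have h2 : Tendsto (fun X : ℕ => ((X:ℝ)) ^ (-δ)) atTop (nhds 0) :=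
      h1.comp tendsto_natCast_atTop_atTop
    have := h2.const_mul (8 * C₂)
    simpa using this
  -- B/A → 0
  have hBA : Tendsto (fun X : ℕ => ((BX ε X).card : ℝ) / ((AX X).card : ℝ)) atTop (nhds 0) := by
    apply squeeze_zero' ?_ ?_ hbound0
    · filter_upwards with X
      positivity
    · filter_upwards [eventually_ge_atTop 2] with X hX
      exact hratio X hX
  -- final
  have hfinal : Tendsto (fun X : ℕ => 1 - ((BX ε X).card : ℝ) / ((AX X).card : ℝ))
      atTop (nhds 1) := by
    have := (tendsto_const_nhds (x := (1:ℝ)) (f := atTop (α := ℕ))).sub hBA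
    simpa using this
  refine hfinal.congr ?_
  intro X
  rw [hAset X, hGset X, Set.ncard_coe_finset, Set.ncard_coe_finset, hGB X]
  rw [sub_div, div_self (ne_of_gt (hApos X))]
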